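/- arXiv:1504.02739 — 2 statements merged into one kernel-verified Lean document; each statement's English description precedes it below -/
import Mathlib

section
/- If f ∈ ℂ[x₁,…,x_k] is homogeneous of degree d ≥ 1 and g = ℓ·f for a linear form ℓ, and every partial derivative of g is a scalar multiple of f, then (after a linear change of coordinates taking ℓ to x₁) f is divisible by x₁, and by induction f is a scalar multiple of x₁^d. -/
open MvPolynomial

private lemma deg_single_one {k : ℕ} (i : Fin k) :
    (Finsupp.single i 1 : Fin k →₀ ℕ).degree = 1 := by
  simp [Finsupp.degree_apply, Finsupp.support_single_ne_zero i one_ne_zero]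

private lemma deg_sub {k : ℕ} (s : Fin k →₀ ℕ) (i : Fin k) (h : s i ≠ 0) :
    (s - Finsupp.single i 1).degree + 1 = s.degree := by
  have hle : Finsupp.single i 1 ≤ s := by
    rw [Finsupp.single_le_iff]
    omega
  have hs : (s - Finsupp.single i 1) + Finsupp.single i 1 = s := tsub_add_cancel_of_le hle
  have := congrArg Finsupp.degree hs
  rw [Finsupp.degree_eq_weight_one] at this ⊢
  rw [map_add] at this
  rw [← Finsupp.degree_eq_weight_one] at this ⊢
  rwa [deg_single_one] at this

/-- Euler's identity for homogeneous multivariate polynomials. -/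
private lemma euler_id {k n : ℕ} {u : MvPolynomial (Fin k) ℂ} (hu : u.IsHomogeneous n) :
    ∑ i : Fin k, X i * pderiv i u = (n : ℂ) • u := by
  conv_lhs => rw [u.as_sum]
  conv_rhs => rw [u.as_sum]
  rw [Finset.smul_sum]
  simp_rw [map_sum, Finset.mul_sum]
  rw [Finset.sum_comm]
  refine Finset.sum_congr rfl fun s hs => ?_
  have hdeg : s.degree = n := by
    rw [Finsupp.degree_eq_weight_one]; exact hu (mem_support_iff.mp hs)
  have key : ∀ i : Fin k, X i * pderiv i (monomial s (coeff s u)) =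
      monomial s ((s i : ℂ) * coeff s u) := by
    intro i
    rw [pderiv_monomial]
    by_cases h : s i = 0
    · simp [h]
    · have hle : (Finsupp.single i 1 : Fin k →₀ ℕ) ≤ s := by
        rw [Finsupp.single_le_iff]; omega
      rw [X, monomial_mul, one_mul, mul_comm, add_comm, tsub_add_cancel_of_le hle]
  simp_rw [key]
  rw [← map_sum (monomial s), ← Finset.sum_mul]
  rw [smul_monomial]
  congr 1
  have : ∑ i : Fin k, (s i : ℂ) = (n : ℂ) := by
    rw [← hdeg, Finsupp.degree_apply]
    push_cast
    rw [Finset.sum_subset (Finset.subset_univ s.support)]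
    intro x _ hx
    simp [Finsupp.notMem_support_iff.mp hx]
  rw [this, smul_eq_mul]

private lemma pderiv_isHomogeneous {k n : ℕ} {u : MvPolynomial (Fin k) ℂ}
    (hu : u.IsHomogeneous n) (i : Fin k) : (pderiv i u).IsHomogeneous (n - 1) := by
  conv_lhs => rw [u.as_sum]
  rw [map_sum]
  apply IsHomogeneous.sum
  intro s hs
  rw [pderiv_monomial]
  by_cases h : s i = 0
  · rw [h]
    simp only [Nat.cast_zero, mul_zero, map_zero]
    exact isHomogeneous_zero _ _ _
  · apply isHomogeneous_monomial
    have hdeg : s.degree = n := by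
      rw [Finsupp.degree_eq_weight_one]; exact hu (mem_support_iff.mp hs)
    have := deg_sub s i h
    omega

private lemma homog_zero_eq_C {k : ℕ} {u : MvPolynomial (Fin k) ℂ}
    (hu : u.IsHomogeneous 0) : u = C (coeff 0 u) := by
  ext d
  by_cases h : d = 0
  · simp [h]
  · rw [coeff_C, if_neg (Ne.symm h)]
    exact hu.coeff_eq_zero (by rwa [ne_eq, Finsupp.degree_eq_zero_iff])

private lemma key_induction {k : ℕ} (ℓ : MvPolynomial (Fin k) ℂ)
    (hℓ : ℓ.IsHomogeneous 1) (hℓ0 : ℓ ≠ 0) :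
    ∀ e : ℕ, ∀ u : MvPolynomial (Fin k) ℂ, u ≠ 0 → u.IsHomogeneous e →
    (∀ i : Fin k, ∃ a : ℂ, ℓ * pderiv i u = a • u) →
    ∃ c : ℂ, c ≠ 0 ∧ u = c • ℓ ^ e := by
  intro e
  induction e with
  | zero =>
    intro u hu0 hu _
    refine ⟨coeff 0 u, ?_, ?_⟩
    · intro h
      apply hu0
      rw [homog_zero_eq_C hu, h, map_zero]
    · rw [pow_zero, smul_eq_C_mul, mul_one]
      exact homog_zero_eq_C hu
  | succ e ih =>
    intro u hu0 hu hrel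
    -- find i with pderiv i u ≠ 0
    have heuler := euler_id hu
    have hne : ((e + 1 : ℕ) : ℂ) • u ≠ 0 :=
      smul_ne_zero (Nat.cast_ne_zero.mpr (by omega)) hu0
    rw [← heuler] at hne
    obtain ⟨i, hi⟩ : ∃ i : Fin k, X i * pderiv i u ≠ 0 := by
      by_contra h
      push_neg at h
      exact hne (Finset.sum_eq_zero fun i _ => h i)
    have hdu : pderiv i u ≠ 0 := fun h => hi (by rw [h, mul_zero])
    obtain ⟨a, ha⟩ := hrel i
    have ha0 : a ≠ 0 := by
      intro h
      rw [h, zero_smul] at ha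
      exact mul_ne_zero hℓ0 hdu ha
    -- u = ℓ * v
    set v : MvPolynomial (Fin k) ℂ := a⁻¹ • pderiv i u with hv
    have huv : u = ℓ * v := by
      rw [hv, mul_smul_comm, ha, smul_smul, inv_mul_cancel₀ ha0, one_smul]
    have hv0 : v ≠ 0 := by
      simp only [hv, ne_eq, smul_eq_zero, inv_eq_zero, not_or]
      exact ⟨ha0, hdu⟩
    have hvhom : v.IsHomogeneous e := by
      rw [hv, smul_eq_C_mul]
      have := (pderiv_isHomogeneous hu i).C_mul a⁻¹
      simpa using this
    -- relation for v
    have hrelv : ∀ j : Fin k, ∃ b : ℂ, ℓ * pderiv j v = b • v := by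
      intro j
      obtain ⟨b, hb⟩ := hrel j
      have hdl : pderiv j ℓ = C (coeff 0 (pderiv j ℓ)) := by
        apply homog_zero_eq_C
        simpa using pderiv_isHomogeneous hℓ j
      set cj := coeff 0 (pderiv j ℓ)
      refine ⟨b - cj, ?_⟩
      rw [huv, pderiv_mul, hdl, smul_eq_C_mul] at hb
      have h2 : C cj * v + ℓ * pderiv j v = C b * v :=
        mul_left_cancel₀ hℓ0 (by linear_combination hb)
      rw [smul_eq_C_mul, map_sub]
      linear_combination h2
    obtain ⟨c, hc0, hcv⟩ := ih v hv0 hvhom hrelv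
    refine ⟨c, hc0, ?_⟩
    rw [huv, hcv, pow_succ, mul_smul_comm]
    ring

theorem stmt_4 {k d : ℕ} (hd : 1 ≤ d)
    (ℓ f g : MvPolynomial (Fin k) ℂ)
    (hℓ : ℓ.IsHomogeneous 1) (hℓ0 : ℓ ≠ 0)
    (hf : f.IsHomogeneous d) (hf0 : f ≠ 0)
    (hgf : g = ℓ * f) (hg0 : g ≠ 0)
    (hder : ∀ i : Fin k, ∃ a : ℂ, pderiv i g = a • f) :
    ∃ c : ℂ, c ≠ 0 ∧ f = c • ℓ ^ d := by
  apply key_induction ℓ hℓ hℓ0 d f hf0 hf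
  intro i
  obtain ⟨a, ha⟩ := hder i
  have hdl : pderiv i ℓ = C (coeff 0 (pderiv i ℓ)) := by
    apply homog_zero_eq_C
    simpa using pderiv_isHomogeneous hℓ i
  set ci := coeff 0 (pderiv i ℓ)
  refine ⟨a - ci, ?_⟩
  rw [hgf, pderiv_mul, hdl, smul_eq_C_mul] at ha
  rw [smul_eq_C_mul, map_sub]
  linear_combination ha
end

section
/- Cartan's Lemma: let ω₁,…,ω_k be linearly independent elements of a vector space V over ℂ, and let η₁,…,η_k ∈ V satisfy Σ_{i=1}^k ω_i ∧ η_i = 0 in Λ²V. Then there exist scalars q_{ij} with q_{ij} = q_{ji} such that η_i = Σ_j q_{ij} ω_j. -/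
open ExteriorAlgebra Module

noncomputable def wedgeForm2 {V : Type*} [AddCommGroup V] [Module ℂ V]
    (f g : Module.Dual ℂ V) : V [⋀^Fin 2]→ₗ[ℂ] ℂ where
  toMultilinearMap :=
    (MultilinearMap.mkPiAlgebraFin ℂ 2 ℂ).compLinearMap ![f, g] -
    (MultilinearMap.mkPiAlgebraFin ℂ 2 ℂ).compLinearMap ![g, f]
  map_eq_zero_of_eq' := by
    intro v i j hv hij
    have h01 : v 0 = v 1 := by
      fin_cases i <;> fin_cases j <;> simp_all
    simp [MultilinearMap.mkPiAlgebraFin_apply, List.ofFn_succ, h01]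
    ring

lemma wedgeForm2_apply {V : Type*} [AddCommGroup V] [Module ℂ V]
    (f g : Module.Dual ℂ V) (x y : V) :
    wedgeForm2 f g ![x, y] = f x * g y - g x * f y := by
  simp [wedgeForm2, MultilinearMap.mkPiAlgebraFin_apply, List.ofFn_succ]

noncomputable def wedgeFam {V : Type*} [AddCommGroup V] [Module ℂ V]
    (f g : Module.Dual ℂ V) : ∀ i : ℕ, V [⋀^Fin i]→ₗ[ℂ] ℂ
  | 2 => wedgeForm2 f g
  | _ => 0

lemma wedgeFam_key {V : Type*} [AddCommGroup V] [Module ℂ V]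
    (f g : Module.Dual ℂ V) (x y : V) :
    liftAlternating (wedgeFam f g) (ι ℂ x * ι ℂ y) = f x * g y - g x * f y := by
  rw [liftAlternating_ι_mul, liftAlternating_ι]
  show (wedgeFam f g 2).curryLeft x ![y] = _
  rw [AlternatingMap.curryLeft_apply_apply]
  exact wedgeForm2_apply f g x y

theorem stmt_8 {k : ℕ} (V : Type*) [AddCommGroup V] [Module ℂ V]
    [FiniteDimensional ℂ V]
    (ω η : Fin k → V) (hω : LinearIndependent ℂ ω)
    (hsum : ∑ i : Fin k,
      ExteriorAlgebra.ι ℂ (ω i) * ExteriorAlgebra.ι ℂ (η i) = 0) :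
    ∃ q : Fin k → Fin k → ℂ, (∀ i j, q i j = q j i) ∧
      ∀ i, η i = ∑ j : Fin k, q i j • ω j := by
  classical
  have key : ∀ f g : Module.Dual ℂ V,
      ∑ i : Fin k, (f (ω i) * g (η i) - g (ω i) * f (η i)) = 0 := by
    intro f g
    have h := congrArg (liftAlternating (wedgeFam f g)) hsum
    rw [map_zero, map_sum] at h
    simpa [wedgeFam_key] using h
  -- build dual functionals
  set S : Submodule ℂ V := Submodule.span ℂ (Set.range ω) with hS
  let b : Basis (Fin k) ℂ S := Basis.span hω
  obtain ⟨Q, hQ⟩ := S.exists_isCompl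
  let p : V →ₗ[ℂ] S := Submodule.linearProjOfIsCompl S Q hQ
  let f : Fin k → Module.Dual ℂ V := fun j => (b.coord j).comp p
  have hf : ∀ j i, f j (ω i) = if i = j then 1 else 0 := by
    intro j i
    have hmem : ω i ∈ S := Submodule.subset_span ⟨i, rfl⟩
    have hp : p (ω i) = ⟨ω i, hmem⟩ :=
      Submodule.linearProjOfIsCompl_apply_left hQ ⟨ω i, hmem⟩
    have hb : b i = ⟨ω i, hmem⟩ := Basis.span_apply hω i
    simp [f, hp, ← hb, Finsupp.single_apply]
  refine ⟨fun i j => f i (η j), ?_, ?_⟩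
  · intro i j
    have h := key (f i) (f j)
    simp only [hf, ite_mul, one_mul, zero_mul] at h
    rw [Finset.sum_sub_distrib, Finset.sum_ite_eq' Finset.univ i,
      Finset.sum_ite_eq' Finset.univ j] at h
    simp only [Finset.mem_univ, if_true] at h
    exact (sub_eq_zero.mp h).symm
  · intro i
    rw [← sub_eq_zero, ← Module.forall_dual_apply_eq_zero_iff ℂ]
    intro g
    have h := key (f i) g
    simp only [hf, ite_mul, one_mul, zero_mul] at h
    rw [Finset.sum_sub_distrib, Finset.sum_ite_eq' Finset.univ i] at h
    simp only [Finset.mem_univ, if_true] at h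
    simp [map_sum, map_sub, map_smul, mul_comm, sub_eq_zero]
    exact sub_eq_zero.mp h
end
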